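/- Suppose the probability measure P satisfies (1/2, b)-multiplicative expansion on X with b ≥ 2. Then every measurable S ⊆ X with P(S ∩ Q_i) ≤ P(Q_i)/2 for all i satisfies P(N*(S) \ S) ≥ P(S). -/
import Mathlib


open MeasureTheory Set

/-- `P` satisfies `(1/2, b)`-multiplicative expansion w.r.t. the class partition `Q` and the
neighborhood operation `Nbhd` on sets: for every class `i` and every measurable `S` with
`P_i(S) ≤ 1/2` one has `P_i(Nbhd S) ≥ min (b * P_i S) 1`, where `P_i(T) = P(T ∩ Q i)/P(Q i)`. -/
def MultiplicativeExpansion {X : Type*} [MeasurableSpace X] (P : Measure X)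
    {K : ℕ} (Q : Fin K → Set X) (Nbhd : Set X → Set X) (b : ℝ) : Prop :=
  ∀ i : Fin K, ∀ S : Set X, MeasurableSet S →
    (P (S ∩ Q i)).toReal / (P (Q i)).toReal ≤ 1 / 2 →
    (P (Nbhd S ∩ Q i)).toReal / (P (Q i)).toReal ≥
      min (b * ((P (S ∩ Q i)).toReal / (P (Q i)).toReal)) 1

/-- If `P` satisfies `(1/2, b)`-multiplicative expansion with `b ≥ 2`, then every measurable
`S` with `P (S ∩ Q i) ≤ P (Q i) / 2` for all `i` satisfies `P (N*(S) \ S) ≥ P S`. -/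
theorem constant_expansion_of_multiplicative_b_ge_two
    {X : Type*} [MeasurableSpace X] (P : Measure X) [IsProbabilityMeasure P]
    (K : ℕ) (hK : 1 ≤ K)
    (Gstar : X → Fin K) (hGstar : Measurable Gstar)
    (Q : Fin K → Set X) (hQ : ∀ i, Q i = {x | Gstar x = i})
    (hQpos : ∀ i, 0 < P (Q i))
    (N : X → Set X) (hNmeas : ∀ x, MeasurableSet (N x))
    (Nbhd : Set X → Set X) (hNbhd : ∀ S : Set X, Nbhd S = ⋃ x ∈ S, N x)
    (Nstar : Set X → Set X)
    (hNstar : ∀ S : Set X, Nstar S = ⋃ i : Fin K, (Nbhd (S ∩ Q i) ∩ Q i))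
    (hNbhdMeas : ∀ S : Set X, MeasurableSet S → MeasurableSet (Nbhd S))
    (hNstarMeas : ∀ S : Set X, MeasurableSet S → MeasurableSet (Nstar S))
    (b : ℝ) (hb : 2 ≤ b)
    (hexp : MultiplicativeExpansion P Q Nbhd b)
    (S : Set X) (hS : MeasurableSet S)
    (hhalf : ∀ i : Fin K, (P (S ∩ Q i)).toReal ≤ (P (Q i)).toReal / 2) :
    (P (Nstar S \ S)).toReal ≥ (P S).toReal := by

  classical
  -- measurability of Q i
  have hQmeas : ∀ i, MeasurableSet (Q i) := by
    intro i
    rw [hQ i]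
    exact hGstar (measurableSet_singleton i)
  have hQdisj : Pairwise (Function.onFun Disjoint Q) := by
    intro i j hij
    simp only [Function.onFun, Set.disjoint_left]
    intro x hxi hxj
    rw [hQ i] at hxi; rw [hQ j] at hxj
    exact hij (hxi.symm.trans hxj)
  have hQcover : (⋃ i, Q i) = Set.univ := by
    ext x
    simp only [Set.mem_iUnion, Set.mem_univ, iff_true]
    exact ⟨Gstar x, by rw [hQ]; rfl⟩
  set A : Fin K → Set X := fun i => Nbhd (S ∩ Q i) ∩ Q i with hA
  have hAmeas : ∀ i, MeasurableSet (A i) :=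
    fun i => (hNbhdMeas _ (hS.inter (hQmeas i))).inter (hQmeas i)
  have hqpos : ∀ i, 0 < (P (Q i)).toReal := by
    intro i
    exact ENNReal.toReal_pos (hQpos i).ne' (measure_ne_top P _)
  -- key bound: P(A i) ≥ 2 * P(S ∩ Q i)
  have hkey : ∀ i, 2 * (P (S ∩ Q i)).toReal ≤ (P (A i)).toReal := by
    intro i
    have hhalf' : (P ((S ∩ Q i) ∩ Q i)).toReal / (P (Q i)).toReal ≤ 1 / 2 := by
      rw [Set.inter_assoc, Set.inter_self]
      rw [div_le_div_iff₀ (hqpos i) (by norm_num)]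
      linarith [hhalf i]
    have h := hexp i (S ∩ Q i) (hS.inter (hQmeas i)) hhalf'
    rw [Set.inter_assoc, Set.inter_self] at h
    have hmin : 2 * ((P (S ∩ Q i)).toReal / (P (Q i)).toReal) ≤
        min (b * ((P (S ∩ Q i)).toReal / (P (Q i)).toReal)) 1 := by
      have hp0 : 0 ≤ (P (S ∩ Q i)).toReal := ENNReal.toReal_nonneg
      have h1 : (P (S ∩ Q i)).toReal / (P (Q i)).toReal ≤ 1 / 2 := by
        rw [div_le_div_iff₀ (hqpos i) (by norm_num)]
        linarith [hhalf i]
      refine le_min ?_ (by linarith)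
      exact mul_le_mul_of_nonneg_right hb (div_nonneg hp0 (hqpos i).le)
    have h2 : 2 * ((P (S ∩ Q i)).toReal / (P (Q i)).toReal) ≤
        (P (A i)).toReal / (P (Q i)).toReal := le_trans hmin h
    have h3 := mul_le_mul_of_nonneg_right h2 (hqpos i).le
    rw [mul_assoc, div_mul_cancel₀ _ (hqpos i).ne', div_mul_cancel₀ _ (hqpos i).ne'] at h3
    exact h3
  -- P(A i \ S) ≥ P(S ∩ Q i)
  have hdiff : ∀ i, (P (S ∩ Q i)).toReal ≤ (P (A i \ S)).toReal := by
    intro i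
    have hsplit : P (A i ∩ S) + P (A i \ S) = P (A i) :=
      measure_inter_add_diff (A i) hS
    have hsub : P (A i ∩ S) ≤ P (S ∩ Q i) := by
      apply measure_mono
      intro x hx
      exact ⟨hx.2, hx.1.2⟩
    have h1 : (P (A i ∩ S)).toReal + (P (A i \ S)).toReal = (P (A i)).toReal := by
      rw [← ENNReal.toReal_add (measure_ne_top P _) (measure_ne_top P _), hsplit]
    have h2 : (P (A i ∩ S)).toReal ≤ (P (S ∩ Q i)).toReal :=
      ENNReal.toReal_mono (measure_ne_top P _) hsub
    linarith [hkey i]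
  -- decompose Nstar S \ S
  have hdecomp : Nstar S \ S = ⋃ i, (A i \ S) := by
    rw [hNstar S, Set.iUnion_diff]
  have hdisj2 : Pairwise (Function.onFun Disjoint (fun i => A i \ S)) := by
    intro i j hij
    exact Set.disjoint_of_subset (fun x hx => hx.1.2) (fun x hx => hx.1.2) (hQdisj hij)
  have hsum1 : P (Nstar S \ S) = ∑ i, P (A i \ S) := by
    rw [hdecomp, measure_iUnion hdisj2 (fun i => (hAmeas i).diff hS), tsum_fintype]
  have hSdecomp : S = ⋃ i, (S ∩ Q i) := by
    rw [← Set.inter_iUnion, hQcover, Set.inter_univ]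
  have hdisj3 : Pairwise (Function.onFun Disjoint (fun i => S ∩ Q i)) := by
    intro i j hij
    exact Set.disjoint_of_subset (fun x hx => hx.2) (fun x hx => hx.2) (hQdisj hij)
  have hsum2 : P S = ∑ i, P (S ∩ Q i) := by
    conv_lhs => rw [hSdecomp]
    rw [measure_iUnion hdisj3 (fun i => hS.inter (hQmeas i)), tsum_fintype]
  rw [hsum1, hsum2, ENNReal.toReal_sum (fun i _ => measure_ne_top P _),
    ENNReal.toReal_sum (fun i _ => measure_ne_top P _)]
  exact Finset.sum_le_sum (fun i _ => hdiff i)
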